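/- (Submodularity of the energy with convex priors) Let V be a finite vertex set, Ẽ ⊆ V×V a finite edge set, E_i : ℤ → ℝ unary terms, and h : ℝ → ℝ convex. Define E(x) = Σ_{i∈V} E_i(x_i) + Σ_{(i,j)∈Ẽ} h(x_i − x_j) for x : V → ℤ. Then E is submodular on the lattice ℤ^V: for all labellings x, y : V → ℤ, E(x ∨ y) + E(x ∧ y) ≤ E(x) + E(y), where (x ∨ y)_i = max(x_i, y_i) and (x ∧ y)_i = min(x_i, y_i). -/

import Mathlib

private lemma convex_pair {h : ℝ → ℝ} (hconv : ConvexOn ℝ Set.univ h)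
    {a b u : ℝ} (h1 : min a b ≤ u) (h2 : u ≤ max a b) :
    h u + h (a + b - u) ≤ h a + h b := by
  rcases le_total a b with hab | hab
  · rw [min_eq_left hab] at h1
    rw [max_eq_right hab] at h2
    rcases eq_or_lt_of_le hab with rfl | hlt
    · have hu : u = a := le_antisymm h2 h1
      rw [hu]
      have h3 : a + a - a = a := by ring
      rw [h3]
    · set t : ℝ := (u - a) / (b - a) with ht
      have hba : (0:ℝ) < b - a := by linarith
      have ht0 : 0 ≤ t := div_nonneg (by linarith) hba.le
      have ht1 : t ≤ 1 := by rw [ht, div_le_one hba]; linarith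
      have hu : u = (1 - t) * a + t * b := by
        have htb : t * (b - a) = u - a := div_mul_cancel₀ _ hba.ne'
        linear_combination -htb
      have hv : a + b - u = t * a + (1 - t) * b := by
        have htb : t * (b - a) = u - a := div_mul_cancel₀ _ hba.ne'
        linear_combination htb
      have c1 := hconv.2 (Set.mem_univ a) (Set.mem_univ b)
        (by linarith : (0:ℝ) ≤ 1 - t) ht0 (by ring)
      have c2 := hconv.2 (Set.mem_univ a) (Set.mem_univ b)
        ht0 (by linarith : (0:ℝ) ≤ 1 - t) (by ring)
      simp only [smul_eq_mul] at c1 c2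
      rw [hv, hu]
      calc h ((1-t)*a + t*b) + h (t*a + (1-t)*b)
          ≤ ((1-t) * h a + t * h b) + (t * h a + (1-t) * h b) := add_le_add c1 c2
        _ = h a + h b := by ring
  · rw [min_eq_right hab] at h1
    rw [max_eq_left hab] at h2
    rcases eq_or_lt_of_le hab with rfl | hlt
    · have hu : u = b := le_antisymm h2 h1
      rw [hu]
      have h3 : b + b - b = b := by ring
      rw [h3]
    · set t : ℝ := (u - b) / (a - b) with ht
      have hba : (0:ℝ) < a - b := by linarith
      have ht0 : 0 ≤ t := div_nonneg (by linarith) hba.le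
      have ht1 : t ≤ 1 := by rw [ht, div_le_one hba]; linarith
      have hu : u = (1 - t) * b + t * a := by
        have htb : t * (a - b) = u - b := div_mul_cancel₀ _ hba.ne'
        linear_combination -htb
      have hv : a + b - u = t * b + (1 - t) * a := by
        have htb : t * (a - b) = u - b := div_mul_cancel₀ _ hba.ne'
        linear_combination htb
      have c1 := hconv.2 (Set.mem_univ b) (Set.mem_univ a)
        (by linarith : (0:ℝ) ≤ 1 - t) ht0 (by ring)
      have c2 := hconv.2 (Set.mem_univ b) (Set.mem_univ a)
        ht0 (by linarith : (0:ℝ) ≤ 1 - t) (by ring)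
      simp only [smul_eq_mul] at c1 c2
      rw [hv, hu]
      calc h ((1-t)*b + t*a) + h (t*b + (1-t)*a)
          ≤ ((1-t) * h b + t * h a) + (t * h b + (1-t) * h a) := add_le_add c1 c2
        _ = h a + h b := by ring

/-- Submodularity of the MRF energy with convex pairwise priors: the energy
`E(x) = Σ_i E_i(x_i) + Σ_{(i,j)} h(x_i - x_j)` with `h` convex is submodular on the
lattice `ℤ^V` (componentwise max and min). -/
theorem convex_energy_submodular {V : Type*} [Fintype V]
    (Edges : Finset (V × V)) (Eu : V → ℤ → ℝ) (h : ℝ → ℝ)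
    (hconv : ConvexOn ℝ Set.univ h)
    (E : (V → ℤ) → ℝ)
    (hE : ∀ x : V → ℤ,
      E x = (∑ i, Eu i (x i)) + ∑ e ∈ Edges, h (((x e.1 : ℤ) : ℝ) - ((x e.2 : ℤ) : ℝ)))
    (x y : V → ℤ) :
    E (fun i => max (x i) (y i)) + E (fun i => min (x i) (y i)) ≤ E x + E y := by
  rw [hE, hE, hE, hE]
  push_cast
  have hun : (∑ i, Eu i (max (x i) (y i))) + (∑ i, Eu i (min (x i) (y i)))
      = (∑ i, Eu i (x i)) + (∑ i, Eu i (y i)) := by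
    rw [← Finset.sum_add_distrib, ← Finset.sum_add_distrib]
    refine Finset.sum_congr rfl fun i _ => ?_
    rcases le_total (x i) (y i) with hc | hc
    · rw [max_eq_right hc, min_eq_left hc]; ring
    · rw [max_eq_left hc, min_eq_right hc]; try ring
  have hpair : (∑ e ∈ Edges, h (max (x e.1 : ℝ) (y e.1 : ℝ) - max (x e.2 : ℝ) (y e.2 : ℝ)))
      + (∑ e ∈ Edges, h (min (x e.1 : ℝ) (y e.1 : ℝ) - min (x e.2 : ℝ) (y e.2 : ℝ)))
      ≤ (∑ e ∈ Edges, h ((x e.1 : ℝ) - (x e.2 : ℝ)))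
      + (∑ e ∈ Edges, h ((y e.1 : ℝ) - (y e.2 : ℝ))) := by
    rw [← Finset.sum_add_distrib, ← Finset.sum_add_distrib]
    refine Finset.sum_le_sum fun e _ => ?_
    set a : ℝ := (x e.1 : ℝ) - (x e.2 : ℝ) with ha
    set b : ℝ := (y e.1 : ℝ) - (y e.2 : ℝ) with hb
    set u : ℝ := max (x e.1 : ℝ) (y e.1 : ℝ) - max (x e.2 : ℝ) (y e.2 : ℝ) with hudef
    have hm1 : max (x e.1 : ℝ) (y e.1 : ℝ) + min (x e.1 : ℝ) (y e.1 : ℝ)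
        = (x e.1 : ℝ) + (y e.1 : ℝ) := max_add_min _ _
    have hm2 : max (x e.2 : ℝ) (y e.2 : ℝ) + min (x e.2 : ℝ) (y e.2 : ℝ)
        = (x e.2 : ℝ) + (y e.2 : ℝ) := max_add_min _ _
    have hv : min (x e.1 : ℝ) (y e.1 : ℝ) - min (x e.2 : ℝ) (y e.2 : ℝ) = a + b - u := by
      rw [ha, hb, hudef]; linarith
    have h1 : min a b ≤ u := by
      rw [min_le_iff]
      rcases le_total ((x e.2 : ℝ)) ((y e.2 : ℝ)) with h2 | h2
      · right
        rw [hudef, hb, max_eq_right h2]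
        have := le_max_right (x e.1 : ℝ) (y e.1 : ℝ)
        linarith
      · left
        rw [hudef, ha, max_eq_left h2]
        have := le_max_left (x e.1 : ℝ) (y e.1 : ℝ)
        linarith
    have h2 : u ≤ max a b := by
      rw [le_max_iff]
      rcases le_total ((x e.1 : ℝ)) ((y e.1 : ℝ)) with h3 | h3
      · right
        rw [hudef, hb, max_eq_right h3]
        have := le_max_right (x e.2 : ℝ) (y e.2 : ℝ)
        linarith
      · left
        rw [hudef, ha, max_eq_left h3]
        have := le_max_left (x e.2 : ℝ) (y e.2 : ℝ)
        linarith
    rw [hv]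
    exact convex_pair hconv h1 h2
  linarith
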